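/- Let k ≥ 3, A ∈ GL_2(F_q) with γ_A(z) = (az+b)/(cz+d), and let D be the order of the class of A in PGL_2(F_q). Suppose f is a monic irreducible polynomial of degree k over F_q fixed by the induced action, i.e., f(x) = c_f (cx + d)^k f((ax+b)/(cx+d)) for the appropriate normalizing constant c_f ∈ F_q^*. Then D divides k. -/

import Mathlib

open Polynomial

/-- if a monic irreducible `f` of degree `k ≥ 3` over `F_q` is fixed by the
Möbius action of `A ∈ GL₂(F_q)`, i.e. `f = c_f · (cx+d)^k f((ax+b)/(cx+d))`, then the order
`D` of the class of `A` in `PGL₂(F_q)` divides `k`. (Here `(cx+d)^k f((ax+b)/(cx+d))` is the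
polynomial `Σ fᵢ (ax+b)^i (cx+d)^{k-i}`.) -/
theorem stmt_19 (F : Type*) [Field F] [Fintype F]
    (k : ℕ) (hk : 3 ≤ k)
    (A : GL (Fin 2) F)
    (a b c d : F)
    (ha : a = (A : Matrix (Fin 2) (Fin 2) F) 0 0)
    (hb : b = (A : Matrix (Fin 2) (Fin 2) F) 0 1)
    (hc : c = (A : Matrix (Fin 2) (Fin 2) F) 1 0)
    (hd : d = (A : Matrix (Fin 2) (Fin 2) F) 1 1)
    (D : ℕ)
    (hD : D = orderOf (QuotientGroup.mk A :
      GL (Fin 2) F ⧸ Subgroup.center (GL (Fin 2) F)))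
    (f : Polynomial F) (hmonic : f.Monic) (hirr : Irreducible f) (hdeg : f.natDegree = k)
    (cf : F) (hcf : cf ≠ 0)
    (hfix : Polynomial.C cf *
      (∑ i ∈ Finset.range (k + 1), Polynomial.C (f.coeff i) *
        (Polynomial.C a * Polynomial.X + Polynomial.C b) ^ i *
        (Polynomial.C c * Polynomial.X + Polynomial.C d) ^ (k - i)) = f) :
    D ∣ k := by
  haveI := Fact.mk hirr
  set K := AdjoinRoot f with hK
  set α : K := AdjoinRoot.root f with hα
  have hf0 : f ≠ 0 := hmonic.ne_zero
  haveI : FiniteDimensional F K := PowerBasis.finite (AdjoinRoot.powerBasis hf0)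
  have hfinrank : Module.finrank F K = k := by
    rw [(AdjoinRoot.powerBasis hf0).finrank, AdjoinRoot.powerBasis_dim, hdeg]
  set ι := algebraMap F K with hι
  have hιinj : Function.Injective ι := (algebraMap F K).injective
  have hroot : aeval α f = 0 := by rw [AdjoinRoot.aeval_eq, AdjoinRoot.mk_self]
  -- no nonzero polynomial of degree < k kills α
  have hsmall : ∀ p : F[X], p.natDegree < k → aeval α p = 0 → p = 0 := by
    intro p hpdeg hp0
    by_contra hp
    have hdvd : f ∣ p := by
      have h := minpoly.dvd F α hp0
      have heq : f = minpoly F α :=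
        minpoly.eq_of_irreducible_of_monic hirr hroot hmonic
      exact dvd_trans (dvd_of_eq heq) h
    have := Polynomial.natDegree_le_of_dvd hdvd hp
    omega
  have hdet : a * d - b * c ≠ 0 := by
    have hu : IsUnit ((A : Matrix (Fin 2) (Fin 2) F)).det :=
      (Matrix.isUnit_iff_isUnit_det _).mp A.isUnit
    rw [Matrix.det_fin_two] at hu
    rw [ha, hb, hc, hd]
    exact hu.ne_zero
  -- the denominator does not vanish at α
  have hv : ι c * α + ι d ≠ 0 := by
    intro h
    have hp : (C c * X + C d : F[X]) = 0 := by
      apply hsmall _ (by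
        have h1 : (C c * X + C d : F[X]).natDegree ≤ 1 := by compute_degree
        omega)
      simpa using h
    have hc0 : c = 0 := by
      have := congrArg (fun p => Polynomial.coeff p 1) hp
      simpa using this
    have hd0 : d = 0 := by
      have := congrArg (fun p => Polynomial.coeff p 0) hp
      simpa using this
    rw [hc0, hd0] at hdet
    simp at hdet
  set u : K := ι a * α + ι b with hu
  set v : K := ι c * α + ι d with hvdef
  set β : K := u / v with hβ
  have huv : u = v * β := by rw [hβ, mul_div_cancel₀ _ hv]
  -- β is a root of f
  have hβroot : aeval β f = 0 := by
    have h1 := congrArg (aeval α) hfix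
    rw [hroot, map_mul, map_sum, aeval_C] at h1
    have h2 : (∑ i ∈ Finset.range (k + 1),
        ι (f.coeff i) * u ^ i * v ^ (k - i)) = 0 := by
      have hcf' : ι cf ≠ 0 := fun h => hcf (hιinj (by simpa using h))
      rcases mul_eq_zero.mp h1 with h | h
      · exact absurd h hcf'
      · rw [← h]
        apply Finset.sum_congr rfl
        intro i _
        simp [hu, hvdef, hι]
    have h3 : aeval β f * v ^ k = 0 := by
      rw [Polynomial.aeval_eq_sum_range, hdeg, Finset.sum_mul, ← h2]
      apply Finset.sum_congr rfl
      intro i hi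
      have hik : i ≤ k := by
        have := Finset.mem_range.mp hi; omega
      have hvk : v ^ k = v ^ i * v ^ (k - i) := by
        rw [← pow_add, Nat.add_sub_cancel' hik]
      rw [Algebra.smul_def, hβ, div_pow, hvk]
      have hvi : v ^ i ≠ 0 := pow_ne_zero _ hv
      rw [← mul_assoc, mul_assoc _ (u ^ i / v ^ i), div_mul_cancel₀ _ hvi]
    rcases mul_eq_zero.mp h3 with h | h
    · exact h
    · exact absurd h (pow_ne_zero _ hv)
  -- the automorphism φ sending α to β
  set φ' : K →ₐ[F] K := AdjoinRoot.liftAlgHom f (Algebra.ofId F K) β hβroot with hφ'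
  have hφ'bij : Function.Bijective φ' := by
    refine ⟨φ'.toRingHom.injective, ?_⟩
    have hinj : Function.Injective φ'.toLinearMap := φ'.toRingHom.injective
    exact LinearMap.injective_iff_surjective.mp hinj
  set φ : K ≃ₐ[F] K := AlgEquiv.ofBijective φ' hφ'bij with hφdef
  have hφα : φ α = β := by
    show φ' (AdjoinRoot.root f) = β
    rw [hφ']
    exact AdjoinRoot.liftAlgHom_root f (Algebra.ofId F K) β hβroot
  haveI : Finite K := Module.finite_of_finite F
  have hφk : φ ^ k = 1 := by
    have hcard : Fintype.card (K ≃ₐ[F] K) = k := by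
      rw [← Nat.card_eq_fintype_card, IsGalois.card_aut_eq_finrank, hfinrank]
    rw [← hcard]
    exact pow_card_eq_one
  -- key induction
  set N : ℕ → Matrix (Fin 2) (Fin 2) F :=
    fun m => ((A : Matrix (Fin 2) (Fin 2) F)) ^ m with hN
  have hpow : ∀ m, ((φ ^ m) (ι c * α + ι d)) ≠ 0 := by
    intro m h
    exact hv ((φ ^ m).injective (a₁ := ι c * α + ι d) (a₂ := 0) (by rw [h, map_zero]))
  have key : ∀ m : ℕ, ∃ lam : K, lam ≠ 0 ∧
      ι (N m 0 0) * α + ι (N m 0 1) = lam * ((φ ^ m) α) ∧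
      ι (N m 1 0) * α + ι (N m 1 1) = lam := by
    intro m
    induction m with
    | zero =>
      refine ⟨1, one_ne_zero, ?_, ?_⟩ <;>
        simp [hN, Matrix.one_apply]
    | succ m ih =>
      obtain ⟨lam, hlam, h1, h2⟩ := ih
      set xm : K := (φ ^ m) α with hxm
      set w : K := ι c * xm + ι d with hw
      have hwφ : w = (φ ^ m) (ι c * α + ι d) := by
        rw [hw, map_add, map_mul, AlgEquiv.commutes, AlgEquiv.commutes, hxm]
      have hw0 : w ≠ 0 := by rw [hwφ]; exact hpow m
      have hmul : ∀ i j, N (m + 1) i j =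
          (A : Matrix (Fin 2) (Fin 2) F) i 0 * N m 0 j +
          (A : Matrix (Fin 2) (Fin 2) F) i 1 * N m 1 j := by
        intro i j
        show (((A : Matrix (Fin 2) (Fin 2) F)) ^ (m + 1)) i j = _
        rw [pow_succ', Matrix.mul_apply, Fin.sum_univ_two]
      have hsucc : (φ ^ (m + 1)) α = (φ ^ m) (φ α) := by
        rw [pow_succ]
        rfl
      have hnum : ι a * xm + ι b = w * ((φ ^ (m + 1)) α) := by
        rw [hsucc, hφα, hwφ]
        have := congrArg (φ ^ m) huv
        rw [map_mul] at this
        calc ι a * xm + ι b = (φ ^ m) u := by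
              rw [hu, map_add, map_mul, AlgEquiv.commutes, AlgEquiv.commutes, hxm]
          _ = (φ ^ m) v * (φ ^ m) β := this
          _ = (φ ^ m) (ι c * α + ι d) * (φ ^ m) β := by rw [hvdef]
      refine ⟨lam * w, mul_ne_zero hlam hw0, ?_, ?_⟩
      · rw [hmul 0 0, hmul 0 1, ← ha, ← hb]
        simp only [map_add, map_mul]
        linear_combination ι a * h1 + ι b * h2 + lam * hnum
      · rw [hmul 1 0, hmul 1 1, ← hc, ← hd]
        simp only [map_add, map_mul]
        linear_combination ι c * h1 + ι d * h2 - lam * hw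
  obtain ⟨lam, hlam, h1, h2⟩ := key k
  rw [hφk, AlgEquiv.one_apply] at h1
  -- A^k fixes α, hence is scalar
  set p : F[X] := C (N k 1 0) * X ^ 2 + C (N k 1 1 - N k 0 0) * X - C (N k 0 1) with hp
  have hp0 : p = 0 := by
    apply hsmall
    · have : p.natDegree ≤ 2 := by rw [hp]; compute_degree
      omega
    · have h3 : (ι (N k 1 0) * α + ι (N k 1 1)) * α = ι (N k 0 0) * α + ι (N k 0 1) := by
        rw [h2, ← h1]
      simp only [hp, map_add, map_sub, map_mul, map_pow, aeval_C, aeval_X]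
      linear_combination h3
  have e10 : N k 1 0 = 0 := by
    have := congrArg (fun q => Polynomial.coeff q 2) hp0
    simpa [hp] using this
  have e01 : N k 0 1 = 0 := by
    have := congrArg (fun q => Polynomial.coeff q 0) hp0
    simpa [hp] using this
  have e11 : N k 1 1 = N k 0 0 := by
    have := congrArg (fun q => Polynomial.coeff q 1) hp0
    simp [hp, sub_eq_zero] at this
    exact this
  have hscalar : (↑(A ^ k) : Matrix (Fin 2) (Fin 2) F)
      = N k 0 0 • (1 : Matrix (Fin 2) (Fin 2) F) := by
    have hval : (↑(A ^ k) : Matrix (Fin 2) (Fin 2) F) = N k := by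
      rw [hN, Units.val_pow_eq_pow_val]
    rw [hval]
    ext i j
    fin_cases i <;> fin_cases j <;>
      simp [Matrix.one_apply, e10, e01, e11]
  have hcen : A ^ k ∈ Subgroup.center (GL (Fin 2) F) := by
    rw [Subgroup.mem_center_iff]
    intro g
    apply Units.ext
    show (g : Matrix (Fin 2) (Fin 2) F) * ((A ^ k : GL (Fin 2) F) : Matrix (Fin 2) (Fin 2) F) = ((A ^ k : GL (Fin 2) F) : Matrix (Fin 2) (Fin 2) F) * (g : Matrix (Fin 2) (Fin 2) F)
    rw [hscalar, Matrix.mul_smul, Matrix.smul_mul, mul_one, one_mul]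
  have hq : (QuotientGroup.mk A :
      GL (Fin 2) F ⧸ Subgroup.center (GL (Fin 2) F)) ^ k = 1 := by
    have := (QuotientGroup.eq_one_iff (A ^ k)).mpr hcen
    rw [← this]
    rfl
  rw [hD]
  exact orderOf_dvd_of_pow_eq_one hq
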